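/- Let T be the tree in which at each level n exactly one vertex has n+2 children and all other vertices have exactly one child. Then the set {K(1,n−1)γ(n−1)/γ(n) : n ∈ ℕ} is unbounded, hence the forward shift S is unbounded on H^p(T) and on H^p_0(T). -/
import Mathlib


open scoped BigOperators
open Classical

/-- An infinite, locally finite rooted tree, presented combinatorially via a
parent function and a level (distance-to-root) function.  Every level is a
finite nonempty set of vertices. -/
structure HTree where
  V : Type
  root : V
  parent : V → V
  level : V → ℕ
  level_root : level root = 0
  root_of_level_zero : ∀ v, level v = 0 → v = root
  level_parent : ∀ v, v ≠ root → level (parent v) + 1 = level v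
  finite_level : ∀ n : ℕ, {v : V | level v = n}.Finite
  nonempty_level : ∀ n : ℕ, {v : V | level v = n}.Nonempty

namespace HTree

variable (T : HTree)

/-- The finite set of vertices at level `n`. -/
noncomputable def levelFinset (n : ℕ) : Finset T.V := (T.finite_level n).toFinset

/-- `γ(n)`, the number of vertices at level `n`. -/
noncomputable def gamma (n : ℕ) : ℕ := (T.levelFinset n).card

/-- The set of `m`-children of a vertex `v`. -/
noncomputable def nChildrenFinset (m : ℕ) (v : T.V) : Finset T.V :=
  (T.levelFinset (T.level v + m)).filter (fun w => T.parent^[m] w = v)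

/-- `γ(m,v)`, the number of `m`-children of `v`. -/
noncomputable def numNChildren (m : ℕ) (v : T.V) : ℕ := (T.nChildrenFinset m v).card

/-- The set of children of a vertex. -/
noncomputable def childrenFinset (v : T.V) : Finset T.V := T.nChildrenFinset 1 v

/-- `γ(1,v)`, the number of children of `v`. -/
noncomputable def numChildren (v : T.V) : ℕ := T.numNChildren 1 v

/-- `K(m,r)`, the maximal number of `m`-children among vertices at level `r`. -/
noncomputable def K (m r : ℕ) : ℕ := (T.levelFinset r).sup (fun v => T.numNChildren m v)

/-- `M_p^p(n,f)`, the `p`-th power of the `p`-th mean of `|f|` over level `n`. -/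
noncomputable def Mpp (p : ℝ) (f : T.V → ℂ) (n : ℕ) : ℝ :=
  (1 / (T.gamma n : ℝ)) * ∑ v ∈ T.levelFinset n, ‖f v‖ ^ p

/-- `M_p(n,f)`, the `p`-th mean of `|f|` over level `n`. -/
noncomputable def Mp (p : ℝ) (f : T.V → ℂ) (n : ℕ) : ℝ := (T.Mpp p f n) ^ (1 / p)

/-- Membership in the Hardy space `H^p(T)`. -/
def MemHp (p : ℝ) (f : T.V → ℂ) : Prop := ∃ C : ℝ, ∀ n : ℕ, T.Mp p f n ≤ C

/-- Membership in the little Hardy space `H^p_0(T)`. -/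
def MemHp0 (p : ℝ) (f : T.V → ℂ) : Prop :=
  Filter.Tendsto (T.Mp p f) Filter.atTop (nhds 0)

/-- The `H^p` norm, `sup_n M_p(n,f)`. -/
noncomputable def Hnorm (p : ℝ) (f : T.V → ℂ) : ℝ := ⨆ n : ℕ, T.Mp p f n

/-- The forward shift `(Sf)(v) = f(parent v)`, `(Sf)(root) = 0`. -/
noncomputable def S (f : T.V → ℂ) : T.V → ℂ := fun v => if v = T.root then 0 else f (T.parent v)

/-- The backward shift `(Bf)(v) = Σ_{w child of v} f(w)`. -/
noncomputable def B (f : T.V → ℂ) : T.V → ℂ := fun v => ∑ w ∈ T.childrenFinset v, f w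

/-- An operator `A` is bounded on the subspace described by `Mem`, with the
`H^p` norm. -/
def BoundedOn (A : (T.V → ℂ) → (T.V → ℂ)) (Mem : (T.V → ℂ) → Prop) (p : ℝ) : Prop :=
  ∃ C : ℝ, 0 ≤ C ∧ ∀ f, Mem f → Mem (A f) ∧ T.Hnorm p (A f) ≤ C * T.Hnorm p f

/-- The operator norm of `A` on the subspace described by `Mem`. -/
noncomputable def opNorm (A : (T.V → ℂ) → (T.V → ℂ)) (Mem : (T.V → ℂ) → Prop) (p : ℝ) : ℝ :=
  sInf {C : ℝ | 0 ≤ C ∧ ∀ f, Mem f → Mem (A f) ∧ T.Hnorm p (A f) ≤ C * T.Hnorm p f}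

/-- Hypercyclicity of an operator `A` on the subspace described by `Mem`. -/
def Hypercyclic (A : (T.V → ℂ) → (T.V → ℂ)) (Mem : (T.V → ℂ) → Prop) (p : ℝ) : Prop :=
  ∃ f, Mem f ∧ ∀ g, Mem g → ∀ ε : ℝ, 0 < ε →
    ∃ N : ℕ, T.Hnorm p (fun v => A^[N] f v - g v) < ε

lemma mem_levelFinset' {T : HTree} {n : ℕ} {v : T.V} :
    v ∈ T.levelFinset n ↔ T.level v = n := by
  simp [HTree.levelFinset, (T.finite_level n).mem_toFinset]

lemma gamma_one_le (T : HTree) (hgamma : ∀ n : ℕ, T.gamma n = n * (n + 1) / 2 + 1)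
    (n : ℕ) : 1 ≤ T.gamma n := by
  rw [hgamma]; omega

lemma gamma_succ_le (T : HTree) (hgamma : ∀ n : ℕ, T.gamma n = n * (n + 1) / 2 + 1)
    (n : ℕ) : T.gamma (n + 1) ≤ 3 * T.gamma n := by
  rw [hgamma, hgamma]
  have e1 : 2 * (n * (n + 1) / 2) = n * (n + 1) :=
    Nat.mul_div_cancel' (Nat.even_mul_succ_self n).two_dvd
  have e2 : 2 * ((n + 1) * (n + 1 + 1) / 2) = (n + 1) * (n + 1 + 1) :=
    Nat.mul_div_cancel' (Nat.even_mul_succ_self (n + 1)).two_dvd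
  nlinarith [e1, e2, sq_nonneg n]

lemma ratio_ge (T : HTree) (hgamma : ∀ n : ℕ, T.gamma n = n * (n + 1) / 2 + 1)
    (n : ℕ) :
    ((n : ℝ) + 2) / 3 ≤ ((n : ℝ) + 2) * (T.gamma n : ℝ) / (T.gamma (n + 1) : ℝ) := by
  have g0 : (1 : ℝ) ≤ (T.gamma n : ℝ) := by exact_mod_cast gamma_one_le T hgamma n
  have g1 : (1 : ℝ) ≤ (T.gamma (n + 1) : ℝ) := by exact_mod_cast gamma_one_le T hgamma (n + 1)
  have h31 : (T.gamma (n + 1) : ℝ) ≤ 3 * (T.gamma n : ℝ) := by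
    exact_mod_cast gamma_succ_le T hgamma n
  rw [div_le_div_iff₀ (by norm_num) (by linarith)]
  have hn : (0 : ℝ) ≤ (n : ℝ) := Nat.cast_nonneg n
  nlinarith

lemma exists_max_children (T : HTree) (n : ℕ) :
    ∃ v ∈ T.levelFinset n, T.numNChildren 1 v = T.K 1 n := by
  obtain ⟨v, hv⟩ := T.nonempty_level n
  have hne : (T.levelFinset n).Nonempty := ⟨v, mem_levelFinset'.mpr hv⟩
  obtain ⟨w, hw, hw2⟩ := Finset.exists_mem_eq_sup _ hne (fun v => T.numNChildren 1 v)
  exact ⟨w, hw, hw2.symm⟩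

/-- The key counterexample: for every `C ≥ 0` there is a function in both Hardy
spaces whose shift violates the bound `C`. -/
lemma key_counterexample (T : HTree) (p : ℝ) (hp : 1 ≤ p)
    (hgamma : ∀ n : ℕ, T.gamma n = n * (n + 1) / 2 + 1)
    (hK : ∀ n : ℕ, T.K 1 n = n + 2)
    (C : ℝ) (hC : 0 ≤ C) :
    ∃ f, T.MemHp p f ∧ T.MemHp0 p f ∧ ¬ (T.Hnorm p (T.S f) ≤ C * T.Hnorm p f) := by
  have hp0 : 0 < p := lt_of_lt_of_le one_pos hp
  have hip : 0 < 1 / p := by positivity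
  -- choose n large
  obtain ⟨n, hn⟩ := exists_nat_gt (3 * (C + 1) ^ p)
  -- the special vertex
  obtain ⟨v, hvmem, hvnum⟩ := exists_max_children T n
  have hlv : T.level v = n := mem_levelFinset'.mp hvmem
  have hvnum' : T.numNChildren 1 v = n + 2 := by rw [hvnum, hK]
  set g0 : ℝ := (T.gamma n : ℝ) with hg0
  set g1 : ℝ := (T.gamma (n + 1) : ℝ) with hg1
  have g0pos : (0 : ℝ) < g0 := by
    have := gamma_one_le T hgamma n; rw [hg0]; exact_mod_cast Nat.lt_of_lt_of_le Nat.zero_lt_one this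
  have g1pos : (0 : ℝ) < g1 := by
    have := gamma_one_le T hgamma (n + 1); rw [hg1];
    exact_mod_cast Nat.lt_of_lt_of_le Nat.zero_lt_one this
  classical
  set f : T.V → ℂ := fun w => if w = v then 1 else 0 with hf
  -- means of f
  have hMp : ∀ m, T.Mp p f m = if m = n then (1 / g0) ^ (1 / p) else 0 := by
    intro m
    have hsum : ∑ w ∈ T.levelFinset m, ‖f w‖ ^ p = if v ∈ T.levelFinset m then 1 else 0 := by
      rw [← Finset.sum_ite_eq' (T.levelFinset m) v (fun _ => (1 : ℝ))]
      refine Finset.sum_congr rfl fun w _ => ?_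
      by_cases h : w = v <;>
        simp [hf, h, Real.one_rpow, Real.zero_rpow (ne_of_gt hp0)]
    have hmem : v ∈ T.levelFinset m ↔ m = n := by
      rw [mem_levelFinset', hlv]; exact eq_comm
    unfold HTree.Mp HTree.Mpp
    rw [hsum]
    by_cases h : m = n
    · subst h
      rw [if_pos (hmem.mpr rfl), if_pos rfl, mul_one]
    · rw [if_neg (fun hh => h (hmem.mp hh)), if_neg h, mul_zero,
        Real.zero_rpow (ne_of_gt hip)]
  -- means of S f
  have hMpS : ∀ m, T.Mp p (T.S f) m =
      if m = n + 1 then (((n : ℝ) + 2) / g1) ^ (1 / p) else 0 := by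
    intro m
    have hterm : ∀ w, ‖T.S f w‖ ^ p =
        if (¬ w = T.root ∧ T.parent w = v) then (1 : ℝ) else 0 := by
      intro w
      by_cases hr : w = T.root
      · simp [HTree.S, hr, Real.zero_rpow (ne_of_gt hp0)]
      · by_cases hpw : T.parent w = v <;>
          simp [HTree.S, hr, hpw, hf, Real.one_rpow, Real.zero_rpow (ne_of_gt hp0)]
    have hsum : ∑ w ∈ T.levelFinset m, ‖T.S f w‖ ^ p =
        (((T.levelFinset m).filter (fun w => ¬ w = T.root ∧ T.parent w = v)).card : ℝ) := by
      rw [← Finset.sum_boole]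
      exact Finset.sum_congr rfl fun w _ => hterm w
    by_cases h : m = n + 1
    · subst h
      have hfil : (T.levelFinset (n + 1)).filter (fun w => ¬ w = T.root ∧ T.parent w = v)
          = T.nChildrenFinset 1 v := by
        unfold HTree.nChildrenFinset
        rw [hlv]
        refine Finset.filter_congr fun w hw => ?_
        have hwl : T.level w = n + 1 := mem_levelFinset'.mp hw
        simp only [Function.iterate_one]
        constructor
        · rintro ⟨-, h2⟩; exact h2
        · intro h2
          refine ⟨fun hr => ?_, h2⟩
          rw [hr, T.level_root] at hwl; omega
      unfold HTree.Mp HTree.Mpp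
      rw [hsum, hfil, if_pos rfl]
      have : ((T.nChildrenFinset 1 v).card : ℝ) = (n : ℝ) + 2 := by
        have : (T.nChildrenFinset 1 v).card = n + 2 := hvnum'
        exact_mod_cast this
      rw [this]
      congr 1
      rw [← hg1]
      field_simp
    · have hfil : (T.levelFinset m).filter (fun w => ¬ w = T.root ∧ T.parent w = v)
          = (∅ : Finset T.V) := by
        refine Finset.eq_empty_of_forall_notMem fun w hw => ?_
        rw [Finset.mem_filter] at hw
        obtain ⟨hwm, hwr, hpw⟩ := hw
        have hwl : T.level w = m := mem_levelFinset'.mp hwm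
        have := T.level_parent w hwr
        rw [hpw, hlv] at this
        omega
      unfold HTree.Mp HTree.Mpp
      rw [hsum, hfil, if_neg h]
      simp only [Finset.card_empty, Nat.cast_zero, mul_zero]
      exact Real.zero_rpow (ne_of_gt hip)
  -- bounds
  have hAnn : (0 : ℝ) ≤ (1 / g0) ^ (1 / p) := Real.rpow_nonneg (by positivity) _
  have hBnn : (0 : ℝ) ≤ (((n : ℝ) + 2) / g1) ^ (1 / p) := Real.rpow_nonneg (by positivity) _
  have hMpLe : ∀ m, T.Mp p f m ≤ (1 / g0) ^ (1 / p) := by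
    intro m; rw [hMp m]; split
    · exact le_rfl
    · exact hAnn
  have hHf : T.Hnorm p f ≤ (1 / g0) ^ (1 / p) := ciSup_le hMpLe
  have hMpSLe : ∀ m, T.Mp p (T.S f) m ≤ (((n : ℝ) + 2) / g1) ^ (1 / p) := by
    intro m; rw [hMpS m]; split
    · exact le_rfl
    · exact hBnn
  have hHSf : (((n : ℝ) + 2) / g1) ^ (1 / p) ≤ T.Hnorm p (T.S f) := by
    have hb : BddAbove (Set.range (T.Mp p (T.S f))) := by
      refine ⟨(((n : ℝ) + 2) / g1) ^ (1 / p), ?_⟩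
      rintro x ⟨m, rfl⟩; exact hMpSLe m
    have := le_ciSup hb (n + 1)
    rwa [hMpS (n + 1), if_pos rfl] at this
  refine ⟨f, ⟨(1 / g0) ^ (1 / p), hMpLe⟩, ?_, ?_⟩
  · -- little Hardy space membership
    have hev : T.Mp p f =ᶠ[Filter.atTop] (fun _ => (0 : ℝ)) := by
      filter_upwards [Filter.eventually_ge_atTop (n + 1)] with m hm
      rw [hMp m, if_neg (by omega)]
    exact Filter.Tendsto.congr' hev.symm tendsto_const_nhds
  · -- the norm inequality fails
    intro hle
    have hchain : (((n : ℝ) + 2) / g1) ^ (1 / p) ≤ C * (1 / g0) ^ (1 / p) :=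
      le_trans hHSf (le_trans hle (mul_le_mul_of_nonneg_left hHf hC))
    have hmul := mul_le_mul_of_nonneg_right hchain (Real.rpow_nonneg g0pos.le (1 / p))
    have hL : (((n : ℝ) + 2) / g1) ^ (1 / p) * g0 ^ (1 / p)
        = (((n : ℝ) + 2) * g0 / g1) ^ (1 / p) := by
      rw [← Real.mul_rpow (by positivity) g0pos.le]
      congr 1; field_simp
    have hR : C * (1 / g0) ^ (1 / p) * g0 ^ (1 / p) = C := by
      rw [mul_assoc, ← Real.mul_rpow (by positivity) g0pos.le,
        one_div_mul_cancel (ne_of_gt g0pos), Real.one_rpow, mul_one]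
    rw [hL, hR] at hmul
    -- but the ratio is large
    have hrat : ((n : ℝ) + 2) / 3 ≤ ((n : ℝ) + 2) * g0 / g1 := ratio_ge T hgamma n
    have hCp : (C + 1) ^ p < ((n : ℝ) + 2) * g0 / g1 := by
      have : (C + 1) ^ p < ((n : ℝ) + 2) / 3 := by
        have : 3 * (C + 1) ^ p < (n : ℝ) := hn
        linarith
      linarith
    have hfin : C + 1 ≤ (((n : ℝ) + 2) * g0 / g1) ^ (1 / p) := by
      have h1 : ((C + 1) ^ p) ^ (1 / p) ≤ (((n : ℝ) + 2) * g0 / g1) ^ (1 / p) :=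
        Real.rpow_le_rpow (Real.rpow_nonneg (by linarith) p) hCp.le hip.le
      rwa [← Real.rpow_mul (by linarith : (0:ℝ) ≤ C + 1),
        mul_one_div, div_self (ne_of_gt hp0), Real.rpow_one] at h1
    linarith

end HTree

/-- on the tree where at each level `n` one vertex has `n+2` children and
the rest have one child (`γ(n) = n(n+1)/2 + 1`, `K(1,n) = n+2`), the relevant set is
unbounded and the forward shift is unbounded on `H^p(T)` and on `H^p_0(T)`. -/
theorem forward_shift_unbounded_example (T : HTree) (p : ℝ) (hp : 1 ≤ p)
    (hgamma : ∀ n : ℕ, T.gamma n = n * (n + 1) / 2 + 1)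
    (hK : ∀ n : ℕ, T.K 1 n = n + 2) :
    ¬ BddAbove (Set.range fun n : ℕ =>
        (T.K 1 n : ℝ) * (T.gamma n : ℝ) / (T.gamma (n + 1) : ℝ)) ∧
    ¬ T.BoundedOn T.S (T.MemHp p) p ∧ ¬ T.BoundedOn T.S (T.MemHp0 p) p := by
  refine ⟨?_, ?_, ?_⟩
  · rintro ⟨C, hC⟩
    obtain ⟨n, hn⟩ := exists_nat_gt (3 * C)
    have hmem : (T.K 1 n : ℝ) * (T.gamma n : ℝ) / (T.gamma (n + 1) : ℝ) ≤ C :=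
      hC ⟨n, rfl⟩
    have hKn : (T.K 1 n : ℝ) = (n : ℝ) + 2 := by rw [hK]; push_cast; ring
    have hrat := HTree.ratio_ge T hgamma n
    rw [hKn] at hmem
    have : ((n : ℝ) + 2) / 3 ≤ C := le_trans hrat hmem
    linarith
  · rintro ⟨C, hC0, hC⟩
    obtain ⟨f, hf1, _, hf3⟩ := HTree.key_counterexample T p hp hgamma hK C hC0
    exact hf3 (hC f hf1).2
  · rintro ⟨C, hC0, hC⟩
    obtain ⟨f, _, hf2, hf3⟩ := HTree.key_counterexample T p hp hgamma hK C hC0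
    exact hf3 (hC f hf2).2
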